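/- At each fixed t > 0 and x ∈ ℝ^d with x ≠ 0, if the mass parameter C = C(m) is chosen so that the total mass ∫ B_m(t,·) dx = M is fixed, then B_m(t,x) converges, as m → 1⁺, to M·E(t,x), where E(t,x) = (4πt)^{-d/2} e^{-|x|²/(4t)} is the heat kernel. -/

import Mathlib

open Real MeasureTheory
open Filter

private noncomputable def Gfun (w : ℝ) : ℝ := if w = 0 then 1 else Real.log (1 + w) / w

private lemma Gfun_tendsto : Tendsto Gfun (nhds 0) (nhds 1) := by
  rw [← nhdsNE_sup_pure (0:ℝ), tendsto_sup]
  constructor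
  · have h1 : HasDerivAt (fun w : ℝ => Real.log (1 + w)) 1 0 := by
      have h0 : HasDerivAt (fun w : ℝ => 1 + w) 1 0 := by
        simpa using (hasDerivAt_id (0:ℝ)).const_add (1:ℝ)
      have := (Real.hasDerivAt_log (by norm_num : (1:ℝ) + 0 ≠ 0)).comp 0 h0
      simpa [Function.comp_def] using this
    have h2 := hasDerivAt_iff_tendsto_slope.mp h1
    refine h2.congr' ?_
    filter_upwards [self_mem_nhdsWithin] with w hw
    simp only [Set.mem_compl_iff, Set.mem_singleton_iff] at hw
    simp [slope_def_field, Gfun, hw]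
  · simpa [Gfun] using tendsto_pure_nhds Gfun 0

private lemma key_tendsto {c : ℝ} {cm : ℝ → ℝ}
    (hc : Tendsto cm (nhdsWithin 1 (Set.Ioi 1)) (nhds c)) :
    Tendsto (fun m : ℝ => (max (1 - (m - 1) * cm m) 0) ^ (1 / (m - 1)))
      (nhdsWithin 1 (Set.Ioi 1)) (nhds (Real.exp (-c))) := by
  have hm1 : Tendsto (fun m : ℝ => m - 1) (nhdsWithin 1 (Set.Ioi 1)) (nhds 0) := by
    have : Tendsto (fun m : ℝ => m - 1) (nhds 1) (nhds 0) := by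
      have := ((continuous_id (X:=ℝ)).sub (continuous_const (y := (1:ℝ)))).tendsto 1
      convert this using 2 <;> simp
    exact this.mono_left nhdsWithin_le_nhds
  have hu : Tendsto (fun m => (m - 1) * cm m) (nhdsWithin 1 (Set.Ioi 1)) (nhds 0) := by
    simpa using hm1.mul hc
  have hlt : ∀ᶠ m in nhdsWithin 1 (Set.Ioi 1), (m - 1) * cm m < 1 :=
    hu.eventually (eventually_lt_nhds zero_lt_one)
  have hmem : ∀ᶠ m in nhdsWithin 1 (Set.Ioi 1), (1:ℝ) < m := self_mem_nhdsWithin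
  have hG : Tendsto (fun m => Real.exp (-cm m * Gfun (-((m - 1) * cm m))))
      (nhdsWithin 1 (Set.Ioi 1)) (nhds (Real.exp (-c))) := by
    have h1 : Tendsto (fun m => Gfun (-((m - 1) * cm m))) (nhdsWithin 1 (Set.Ioi 1))
        (nhds 1) := Gfun_tendsto.comp (by simpa using hu.neg)
    have h2 : Tendsto (fun m => -cm m * Gfun (-((m - 1) * cm m)))
        (nhdsWithin 1 (Set.Ioi 1)) (nhds (-c)) := by
      simpa using hc.neg.mul h1
    exact (Real.continuous_exp.tendsto _).comp h2
  refine hG.congr' ?_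
  filter_upwards [hlt, hmem] with m hlt hm
  have hm1pos : 0 < m - 1 := sub_pos.mpr hm
  have hpos : 0 < 1 - (m - 1) * cm m := by linarith
  rw [max_eq_left hpos.le, Real.rpow_def_of_pos hpos]
  congr 1
  by_cases hcm : cm m = 0
  · simp [Gfun, hcm]
  · have hne : -((m - 1) * cm m) ≠ 0 := by
      simp only [neg_ne_zero]
      exact mul_ne_zero hm1pos.ne' hcm
    rw [Gfun, if_neg hne]
    have : 1 + -((m - 1) * cm m) = 1 - (m - 1) * cm m := by ring
    rw [this]
    field_simp


set_option maxHeartbeats 2000000 in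
/-- If the mass parameter `C(m)` is normalized so that the Barenblatt solution has
total mass `M`, then at every fixed `t > 0`, `x`, the Barenblatt solution converges
pointwise to `M` times the heat kernel as `m → 1⁺`. -/
theorem barenblatt_tendsto_heat_kernel (d : ℕ) (hd : 1 ≤ d) (M : ℝ) (hM : 0 < M)
    (Cf α b : ℝ → ℝ)
    (hα : ∀ m, α m = d / (d * (m - 1) + 2)) (hb : ∀ m, b m = α m / d)
    (hCpos : ∀ m, 1 < m → 0 < Cf m)
    (B : ℝ → ℝ → EuclideanSpace ℝ (Fin d) → ℝ)
    (hB : ∀ m t x, B m t x =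
      t ^ (-(α m)) *
        (max (Cf m - b m * (m - 1) * ‖x‖ ^ 2 / (2 * m * t ^ (2 * b m))) 0) ^ (1 / (m - 1)))
    (hmass : ∀ m, 1 < m → ∫ x : EuclideanSpace ℝ (Fin d), B m 1 x = M)
    (E : ℝ → EuclideanSpace ℝ (Fin d) → ℝ)
    (hE : ∀ t x, E t x = (4 * Real.pi * t) ^ (-(d : ℝ) / 2) * Real.exp (-‖x‖ ^ 2 / (4 * t)))
    (t : ℝ) (ht : 0 < t) (x : EuclideanSpace ℝ (Fin d)) :
    Filter.Tendsto (fun m => B m t x) (nhdsWithin 1 (Set.Ioi 1)) (nhds (M * E t x)) := by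
  have hd0 : (0:ℝ) < d := by exact_mod_cast Nat.pos_of_ne_zero (by omega)
  set l := nhdsWithin (1:ℝ) (Set.Ioi 1) with hl
  have hmem : ∀ᶠ m in l, (1:ℝ) < m := self_mem_nhdsWithin
  have hDen : ∀ m : ℝ, 1 < m → 0 < (d:ℝ) * (m - 1) + 2 := by
    intro m hm; nlinarith
  have hbval : ∀ m : ℝ, 1 < m → b m = 1 / ((d:ℝ) * (m - 1) + 2) := by
    intro m hm
    rw [hb, hα]
    rw [div_div, mul_comm ((d:ℝ) * (m - 1) + 2) (d:ℝ), ← div_div, div_self hd0.ne']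
  have hbpos : ∀ m : ℝ, 1 < m → 0 < b m := by
    intro m hm; rw [hbval m hm]; exact one_div_pos.mpr (hDen m hm)
  -- basic limits
  have hidt : Filter.Tendsto (fun m : ℝ => m) l (nhds 1) :=
    tendsto_id.mono_left nhdsWithin_le_nhds
  have hDt : Filter.Tendsto (fun m : ℝ => (d:ℝ) * (m - 1) + 2) l (nhds 2) := by
    have h2 : Filter.Tendsto (fun m : ℝ => (d:ℝ) * (m - 1) + 2) (nhds 1)
        (nhds ((d:ℝ) * ((1:ℝ) - 1) + 2)) :=
      (((continuous_const.mul ((continuous_id (X:=ℝ)).sub continuous_const)).add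
        continuous_const).tendsto 1)
    simpa using h2.mono_left nhdsWithin_le_nhds
  have hαt : Filter.Tendsto α l (nhds ((d:ℝ)/2)) := by
    have : Filter.Tendsto (fun m : ℝ => (d:ℝ) / ((d:ℝ) * (m - 1) + 2)) l (nhds ((d:ℝ)/2)) :=
      tendsto_const_nhds.div hDt two_ne_zero
    exact this.congr fun m => (hα m).symm
  have hbt : Filter.Tendsto b l (nhds (1/2)) := by
    have h1 : Filter.Tendsto (fun m : ℝ => 1 / ((d:ℝ) * (m - 1) + 2)) l (nhds (1/2)) :=
      tendsto_const_nhds.div hDt two_ne_zero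
    refine h1.congr' ?_
    filter_upwards [hmem] with m hm
    exact (hbval m hm).symm
  -- the rescaled profile integral
  have hFmeasC : ∀ m : ℝ, 1 < m → Continuous (fun y : EuclideanSpace ℝ (Fin d) =>
      (max (1 - b m * (m - 1) * ‖y‖ ^ 2 / (2 * m)) 0) ^ (1 / (m - 1))) := by
    intro m hm
    apply Continuous.rpow_const
    · exact (continuous_const.sub
        ((continuous_const.mul (continuous_norm.pow 2)).div_const _)).max continuous_const
    · intro y; right
      have : 0 < m - 1 := by linarith
      positivity
  set I : ℝ → ℝ := fun m => ∫ y : EuclideanSpace ℝ (Fin d),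
    (max (1 - b m * (m - 1) * ‖y‖ ^ 2 / (2 * m)) 0) ^ (1 / (m - 1)) with hI
  have hgauss : ∀ δ : ℝ, 0 < δ →
      Integrable (fun y : EuclideanSpace ℝ (Fin d) => Real.exp (-δ * ‖y‖^2)) := by
    intro δ hδ
    have h1 := (GaussianFourier.integrable_cexp_neg_mul_sq_norm_add
      (b := (δ:ℂ)) (by simpa using hδ) 0 (0 : EuclideanSpace ℝ (Fin d))).norm
    refine h1.congr ?_
    apply Filter.Eventually.of_forall
    intro y
    simp [Complex.norm_exp, ← Complex.ofReal_pow]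
  have hIlim : Filter.Tendsto I l (nhds ((4 * Real.pi) ^ ((d:ℝ)/2))) := by
    have hint : ∫ y : EuclideanSpace ℝ (Fin d), Real.exp (-(4⁻¹:ℝ) * ‖y‖^2)
        = (4 * Real.pi) ^ ((d:ℝ)/2) := by
      rw [GaussianFourier.integral_rexp_neg_mul_sq_norm (by norm_num : (0:ℝ) < 4⁻¹),
        finrank_euclideanSpace_fin]
      congr 1
      field_simp
    rw [← hint]
    set δ : ℝ := 1 / (4 * ((d:ℝ) + 2)) with hδ
    have hδpos : 0 < δ := by positivity
    apply MeasureTheory.tendsto_integral_filter_of_dominated_convergence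
      (bound := fun y : EuclideanSpace ℝ (Fin d) => Real.exp (-δ * ‖y‖^2))
    · filter_upwards [hmem] with m hm
      exact (hFmeasC m hm).aestronglyMeasurable
    · have hm2 : ∀ᶠ m in l, m < 2 := hidt.eventually (eventually_lt_nhds one_lt_two)
      filter_upwards [hmem, hm2] with m hm1 hm2
      apply Filter.Eventually.of_forall
      intro y
      have hm1' : 0 < m - 1 := by linarith
      set k : ℝ := b m * (m - 1) * ‖y‖ ^ 2 / (2 * m) with hk
      have hknn : 0 ≤ k := by
        have := (hbpos m hm1).le
        have hy : (0:ℝ) ≤ ‖y‖^2 := sq_nonneg _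
        positivity
      have h1 : max (1 - k) 0 ≤ Real.exp (-k) := by
        apply max_le _ (Real.exp_pos _).le
        linarith [Real.add_one_le_exp (-k)]
      have h2 : (max (1 - k) 0) ^ (1/(m-1)) ≤ (Real.exp (-k)) ^ (1/(m-1)) :=
        Real.rpow_le_rpow (le_max_right _ _) h1 (by positivity)
      have h3 : (Real.exp (-k)) ^ (1/(m-1)) = Real.exp (-(b m * ‖y‖^2 / (2*m))) := by
        rw [← Real.exp_mul]
        congr 1
        rw [hk]
        field_simp
      have h4 : Real.exp (-(b m * ‖y‖^2 / (2*m))) ≤ Real.exp (-δ * ‖y‖^2) := by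
        apply Real.exp_le_exp.2
        have hble : δ ≤ b m / (2*m) := by
          rw [hbval m hm1, hδ, div_div]
          apply one_div_le_one_div_of_le
          · positivity
          · have e1 : 2*m ≤ 4 := by linarith
            have e2 : (d:ℝ)*(m-1)+2 ≤ (d:ℝ)+2 := by nlinarith [hd0]
            calc ((d:ℝ)*(m-1)+2)*(2*m) ≤ ((d:ℝ)+2)*4 :=
                  mul_le_mul e2 e1 (by linarith) (by positivity)
              _ = 4*((d:ℝ)+2) := by ring
        have : δ * ‖y‖^2 ≤ b m / (2*m) * ‖y‖^2 :=
          mul_le_mul_of_nonneg_right hble (sq_nonneg _)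
        have heq : b m * ‖y‖^2 / (2*m) = b m / (2*m) * ‖y‖^2 := by ring
        rw [heq]
        linarith
      have hnn : 0 ≤ (max (1 - k) 0) ^ (1/(m-1)) := Real.rpow_nonneg (le_max_right _ _) _
      rw [Real.norm_eq_abs, abs_of_nonneg hnn]
      calc (max (1 - k) 0) ^ (1/(m-1)) ≤ (Real.exp (-k)) ^ (1/(m-1)) := h2
        _ = Real.exp (-(b m * ‖y‖^2 / (2*m))) := h3
        _ ≤ Real.exp (-δ * ‖y‖^2) := h4
    · exact hgauss δ hδpos
    · apply Filter.Eventually.of_forall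
      intro y
      have hcm : Filter.Tendsto (fun m : ℝ => b m * ‖y‖^2 / (2*m)) l (nhds (‖y‖^2/4)) := by
        have h1 : Filter.Tendsto (fun m : ℝ => b m * ‖y‖^2 / (2*m)) l
            (nhds ((1/2) * ‖y‖^2 / (2*1))) :=
          (hbt.mul tendsto_const_nhds).div (tendsto_const_nhds.mul hidt) (by norm_num)
        convert h1 using 2
        ring
      have hkey := key_tendsto hcm
      have hrw : ∀ m : ℝ, b m * (m-1) * ‖y‖^2 / (2*m) = (m-1) * (b m * ‖y‖^2 / (2*m)) :=
        fun m => by ring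
      simp_rw [hrw]
      convert hkey using 2
      rw [neg_mul]
      congr 1
      ring
  -- mass identity
  have hmassId : ∀ m : ℝ, 1 < m →
      M = Cf m ^ ((d:ℝ)/2) * (Cf m ^ ((1:ℝ)/(m-1)) * I m) := by
    intro m hm
    have hC := hCpos m hm
    have hm1 : 0 < m - 1 := by linarith
    have h0 := hmass m hm
    have hB1 : ∀ y : EuclideanSpace ℝ (Fin d), B m 1 y =
        (max (Cf m - b m * (m-1) * ‖y‖^2 / (2*m)) 0) ^ (1/(m-1)) := by
      intro y
      rw [hB]
      simp
    simp only [hB1] at h0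
    set R : ℝ := Cf m ^ ((1:ℝ)/2) with hRdef
    have hR : 0 < R := Real.rpow_pos_of_pos hC _
    have hR2 : R ^ 2 = Cf m := by
      rw [hRdef, ← Real.rpow_natCast (Cf m ^ ((1:ℝ)/2)) 2, ← Real.rpow_mul hC.le]
      norm_num
    have hscale := MeasureTheory.Measure.integral_comp_smul_of_nonneg
      (volume : Measure (EuclideanSpace ℝ (Fin d)))
      (fun y => (max (Cf m - b m * (m-1) * ‖y‖^2 / (2*m)) 0) ^ (1/(m-1))) R (hR := hR.le)
    have hcomp : (fun y : EuclideanSpace ℝ (Fin d) =>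
        (max (Cf m - b m * (m-1) * ‖R • y‖^2 / (2*m)) 0) ^ (1/(m-1)))
        = fun y : EuclideanSpace ℝ (Fin d) =>
        Cf m ^ ((1:ℝ)/(m-1)) * (max (1 - b m * (m-1) * ‖y‖^2 / (2*m)) 0) ^ (1/(m-1)) := by
      funext y
      have hnorm : ‖R • y‖^2 = Cf m * ‖y‖^2 := by
        rw [norm_smul, Real.norm_eq_abs, abs_of_nonneg hR.le, mul_pow, hR2]
      rw [hnorm]
      have hfac : Cf m - b m * (m-1) * (Cf m * ‖y‖^2) / (2*m)
          = Cf m * (1 - b m * (m-1) * ‖y‖^2 / (2*m)) := by ring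
      have hmax : Cf m * (max (1 - b m * (m-1) * ‖y‖^2 / (2*m)) 0)
          = max (Cf m * (1 - b m * (m-1) * ‖y‖^2 / (2*m))) 0 := by
        rw [mul_max_of_nonneg _ _ hC.le, mul_zero]
      rw [hfac, ← hmax, Real.mul_rpow hC.le (le_max_right _ _)]
    rw [hcomp] at hscale
    rw [MeasureTheory.integral_const_mul, h0, finrank_euclideanSpace_fin] at hscale
    -- hscale : Cf m ^ (1/(m-1)) * I m = (R ^ d)⁻¹ • M
    have hRd : (R:ℝ) ^ d = Cf m ^ ((d:ℝ)/2) := by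
      rw [hRdef, ← Real.rpow_natCast (Cf m ^ ((1:ℝ)/2)) d, ← Real.rpow_mul hC.le]
      congr 1
      push_cast
      ring
    rw [smul_eq_mul, hRd] at hscale
    have hpow : (0:ℝ) < Cf m ^ ((d:ℝ)/2) := Real.rpow_pos_of_pos hC _
    simp only [hI]
    rw [hscale, ← mul_assoc, mul_inv_cancel₀ hpow.ne', one_mul]
  -- asymptotics of the constant
  have hm1t : Filter.Tendsto (fun m : ℝ => m - 1) l (nhds 0) := by
    have := hidt.sub (tendsto_const_nhds (x := (1:ℝ)))
    simpa using this
  have hIpos : ∀ m : ℝ, 1 < m → 0 < I m := by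
    intro m hm
    have hC := hCpos m hm
    have h := hmassId m hm
    have h1 : 0 < Cf m ^ ((d:ℝ)/2) := Real.rpow_pos_of_pos hC _
    have h2 : 0 < Cf m ^ ((1:ℝ)/(m-1)) := Real.rpow_pos_of_pos hC _
    nlinarith [hM, mul_pos h1 h2]
  have hlogsum : ∀ m : ℝ, 1 < m → (1/(m-1) + (d:ℝ)/2) * Real.log (Cf m)
      = Real.log M - Real.log (I m) := by
    intro m hm
    have hC := hCpos m hm
    have hIp := hIpos m hm
    have h1 : 0 < Cf m ^ ((d:ℝ)/2) := Real.rpow_pos_of_pos hC _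
    have h2 : 0 < Cf m ^ ((1:ℝ)/(m-1)) := Real.rpow_pos_of_pos hC _
    have h := hmassId m hm
    have h3 : Real.log M = ((d:ℝ)/2) * Real.log (Cf m)
        + ((1/(m-1)) * Real.log (Cf m) + Real.log (I m)) := by
      rw [h, Real.log_mul h1.ne' (mul_pos h2 hIp).ne', Real.log_mul h2.ne' hIp.ne',
        Real.log_rpow hC, Real.log_rpow hC]
    linarith
  have hlogI : Filter.Tendsto (fun m => Real.log (I m)) l
      (nhds (((d:ℝ)/2) * Real.log (4*Real.pi))) := by
    have hpos : (0:ℝ) < (4*Real.pi) ^ ((d:ℝ)/2) := Real.rpow_pos_of_pos (by positivity) _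
    have h1 := (Real.continuousAt_log hpos.ne').tendsto.comp hIlim
    rw [Real.log_rpow (by positivity : (0:ℝ) < 4*Real.pi)] at h1
    exact h1
  set L : ℝ := Real.log M - ((d:ℝ)/2) * Real.log (4*Real.pi) with hL
  have hnum : Filter.Tendsto (fun m => Real.log M - Real.log (I m)) l (nhds L) :=
    tendsto_const_nhds.sub hlogI
  have hr : Filter.Tendsto (fun m : ℝ => (1/(m-1)) / (1/(m-1) + (d:ℝ)/2)) l (nhds 1) := by
    have h1 : Filter.Tendsto (fun m : ℝ => 2/((d:ℝ)*(m-1)+2)) l (nhds (2/2)) :=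
      tendsto_const_nhds.div hDt two_ne_zero
    norm_num at h1
    refine h1.congr' ?_
    filter_upwards [hmem] with m hm
    have hm1 : 0 < m - 1 := by linarith
    have hD := hDen m hm
    field_simp
    ring
  have hsinv : Filter.Tendsto (fun m : ℝ => (1/(m-1) + (d:ℝ)/2)⁻¹) l (nhds 0) := by
    have h1 := hm1t.mul hr
    rw [zero_mul] at h1
    refine h1.congr' ?_
    filter_upwards [hmem] with m hm
    have hm1 : 0 < m - 1 := by linarith
    have hs : 0 < 1/(m-1) + (d:ℝ)/2 := by positivity
    field_simp
  have hlogC : Filter.Tendsto (fun m => Real.log (Cf m)) l (nhds 0) := by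
    have h1 := hnum.mul hsinv
    rw [mul_zero] at h1
    refine h1.congr' ?_
    filter_upwards [hmem] with m hm
    have hm1 : 0 < m - 1 := by linarith
    have hs : 0 < 1/(m-1) + (d:ℝ)/2 := by positivity
    rw [← hlogsum m hm, mul_comm, inv_mul_cancel_left₀ hs.ne']
  have hC1 : Filter.Tendsto Cf l (nhds 1) := by
    have h1 := (Real.continuous_exp.tendsto 0).comp hlogC
    rw [Real.exp_zero] at h1
    refine h1.congr' ?_
    filter_upwards [hmem] with m hm
    exact Real.exp_log (hCpos m hm)
  have hCp : Filter.Tendsto (fun m => Cf m ^ ((1:ℝ)/(m-1))) l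
      (nhds (M * (4*Real.pi) ^ (-((d:ℝ)/2)))) := by
    have h1 := (Real.continuous_exp.tendsto (L * 1)).comp (hnum.mul hr)
    have hval : Real.exp (L * 1) = M * (4*Real.pi) ^ (-((d:ℝ)/2)) := by
      rw [mul_one, hL, Real.exp_sub, Real.exp_log hM,
        Real.rpow_def_of_pos (by positivity : (0:ℝ) < 4*Real.pi)]
      rw [div_eq_mul_inv, ← Real.exp_neg]
      congr 2
      ring
    rw [hval] at h1
    refine h1.congr' ?_
    filter_upwards [hmem] with m hm
    have hC := hCpos m hm
    have hm1 : 0 < m - 1 := by linarith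
    have hs : 0 < 1/(m-1) + (d:ℝ)/2 := by positivity
    have h2 : (Real.log M - Real.log (I m)) * ((1/(m-1))/(1/(m-1)+(d:ℝ)/2))
        = Real.log (Cf m) * (1/(m-1)) := by
      rw [← hlogsum m hm]
      field_simp
    show Real.exp ((Real.log M - Real.log (I m)) * ((1/(m-1))/(1/(m-1)+(d:ℝ)/2)))
      = Cf m ^ ((1:ℝ)/(m-1))
    rw [h2, Real.rpow_def_of_pos hC]
  -- final assembly
  set cmx : ℝ → ℝ := fun m => b m * ‖x‖^2 / (2*m*t^(2*b m)*Cf m) with hcmxdef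
  have htb : Filter.Tendsto (fun m : ℝ => t ^ (2 * b m)) l (nhds t) := by
    have h1 := (Real.continuous_exp.tendsto (Real.log t * (2 * (1/2 : ℝ)))).comp
      ((tendsto_const_nhds (x := Real.log t)).mul
        ((tendsto_const_nhds (x := (2:ℝ))).mul hbt))
    have hv : Real.exp (Real.log t * (2 * (1/2 : ℝ))) = t := by
      norm_num [Real.exp_log ht]
    rw [hv] at h1
    refine h1.congr fun m => ?_
    simp only [Function.comp_apply]
    rw [← Real.rpow_def_of_pos ht]
  have hdent : Filter.Tendsto (fun m : ℝ => 2*m*t^(2*b m)*Cf m) l (nhds (2*t)) := by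
    have h1 := (((tendsto_const_nhds (x := (2:ℝ))).mul hidt).mul htb).mul hC1
    have : (2:ℝ) * 1 * t * 1 = 2 * t := by ring
    rw [this] at h1
    exact h1
  have hcmx : Filter.Tendsto cmx l (nhds (‖x‖^2/(4*t))) := by
    have h1 := (hbt.mul (tendsto_const_nhds (x := ‖x‖^2))).div hdent
      (by positivity : (2:ℝ) * t ≠ 0)
    have : (1/2 : ℝ) * ‖x‖^2 / (2*t) = ‖x‖^2/(4*t) := by
      rw [div_eq_div_iff (by positivity) (by positivity)]
      ring
    rw [this] at h1
    exact h1
  have hlast := key_tendsto hcmx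
  have hfirst : Filter.Tendsto (fun m : ℝ => t ^ (-(α m))) l (nhds (t ^ (-((d:ℝ)/2)))) := by
    have h1 := (Real.continuous_exp.tendsto (Real.log t * (-((d:ℝ)/2)))).comp
      ((tendsto_const_nhds (x := Real.log t)).mul hαt.neg)
    have hv : Real.exp (Real.log t * (-((d:ℝ)/2))) = t ^ (-((d:ℝ)/2)) :=
      (Real.rpow_def_of_pos ht _).symm
    rw [hv] at h1
    refine h1.congr fun m => ?_
    simp only [Function.comp_apply]
    rw [← Real.rpow_def_of_pos ht]
  have htotal := (hfirst.mul hCp).mul hlast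
  have hvalue : t ^ (-((d:ℝ)/2)) * (M * (4*Real.pi) ^ (-((d:ℝ)/2)))
      * Real.exp (-(‖x‖^2/(4*t))) = M * E t x := by
    rw [hE, show (-(d:ℝ)/2 : ℝ) = -((d:ℝ)/2) from neg_div _ _,
      show (-‖x‖^2/(4*t) : ℝ) = -(‖x‖^2/(4*t)) from neg_div _ _,
      show ((4*Real.pi*t : ℝ) ^ (-((d:ℝ)/2))) =
        (4*Real.pi) ^ (-((d:ℝ)/2)) * t ^ (-((d:ℝ)/2)) from
        Real.mul_rpow (by positivity) ht.le]
    ring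
  rw [← hvalue]
  refine htotal.congr' ?_
  filter_upwards [hmem] with m hm
  have hC := hCpos m hm
  have hm1 : 0 < m - 1 := by linarith
  have htb0 : (0:ℝ) < t ^ (2 * b m) := Real.rpow_pos_of_pos ht _
  rw [hB]
  have hBase : Cf m - b m * (m - 1) * ‖x‖ ^ 2 / (2 * m * t ^ (2 * b m))
      = Cf m * (1 - (m-1) * cmx m) := by
    have hcm : cmx m = b m * ‖x‖^2 / (2*m*t^(2*b m)*Cf m) := rfl
    rw [hcm]
    field_simp
  rw [hBase]
  have hmax2 : max (Cf m * (1 - (m-1) * cmx m)) 0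
      = Cf m * max (1 - (m-1) * cmx m) 0 := by
    rw [mul_max_of_nonneg _ _ hC.le, mul_zero]
  rw [hmax2, Real.mul_rpow hC.le (le_max_right _ _)]
  ring
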